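/- Let n ≥ 1 and m ≥ 1, let A_1, …, A_m with A_k = (a_ij^{(k)}) be positive n×n reciprocal matrices, and let w_1, …, w_m be positive reals with Σ_{k=1}^m w_k = 1. A positive vector x = (x_j) in ℝⁿ minimizes the function x ↦ Σ_{k=1}^m w_k Σ_{1≤i,j≤n} (log a_ij^{(k)} − log(x_i/x_j))² over all positive vectors if and only if there exists u > 0 such that x_i = u · ∏_{k=1}^m (∏_{j=1}^n a_ij^{(k)})^{w_k/n} for all i. -/

import Mathlib

open Finset

/-- Cross term vanishes when weighted row and column sums of `Q` vanish. -/
lemma wgm_cross_vanish {n m : ℕ} (w : Fin m → ℝ)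
    (Q : Fin m → Fin n → Fin n → ℝ) (d : Fin n → ℝ)
    (hrow : ∀ i, ∑ k, w k * ∑ j, Q k i j = 0)
    (hcol : ∀ j, ∑ k, w k * ∑ i, Q k i j = 0) :
    ∑ k, w k * ∑ i, ∑ j, Q k i j * (d i - d j) = 0 := by
  have hA : ∑ k, w k * ∑ i, ∑ j, Q k i j * d i = 0 := by
    have : ∀ k, w k * ∑ i, ∑ j, Q k i j * d i
        = ∑ i, d i * (w k * ∑ j, Q k i j) := by
      intro k
      rw [Finset.mul_sum]
      refine Finset.sum_congr rfl fun i _ => ?_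
      rw [← Finset.sum_mul]
      ring
    simp only [this]
    rw [Finset.sum_comm]
    refine Finset.sum_eq_zero fun i _ => ?_
    rw [← Finset.mul_sum, hrow i, mul_zero]
  have hB : ∑ k, w k * ∑ i, ∑ j, Q k i j * d j = 0 := by
    have : ∀ k, w k * ∑ i, ∑ j, Q k i j * d j
        = ∑ j, d j * (w k * ∑ i, Q k i j) := by
      intro k
      rw [Finset.sum_comm]
      rw [Finset.mul_sum]
      refine Finset.sum_congr rfl fun j _ => ?_
      rw [← Finset.sum_mul]
      ring
    simp only [this]
    rw [Finset.sum_comm]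
    refine Finset.sum_eq_zero fun j _ => ?_
    rw [← Finset.mul_sum, hcol j, mul_zero]
  calc ∑ k, w k * ∑ i, ∑ j, Q k i j * (d i - d j)
      = (∑ k, w k * ∑ i, ∑ j, Q k i j * d i)
        - ∑ k, w k * ∑ i, ∑ j, Q k i j * d j := by
        rw [← Finset.sum_sub_distrib]
        refine Finset.sum_congr rfl fun k _ => ?_
        rw [← mul_sub, ← Finset.sum_sub_distrib]
        congr 1
        refine Finset.sum_congr rfl fun i _ => ?_
        rw [← Finset.sum_sub_distrib]
        refine Finset.sum_congr rfl fun j _ => ?_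
        ring
    _ = 0 := by rw [hA, hB, sub_zero]

theorem weighted_geometric_mean_minimizes_logEuclidean
    (n m : ℕ) (hn : 1 ≤ n) (hm : 1 ≤ m)
    (A : Fin m → Matrix (Fin n) (Fin n) ℝ)
    (hpos : ∀ k i j, 0 < A k i j)
    (hrec : ∀ k i j, A k i j * A k j i = 1)
    (w : Fin m → ℝ) (hw : ∀ k, 0 < w k) (hsum : ∑ k, w k = 1)
    (x : Fin n → ℝ) (hx : ∀ j, 0 < x j) :
    (∀ y : Fin n → ℝ, (∀ j, 0 < y j) →
        (∑ k, w k * ∑ i, ∑ j, (Real.log (A k i j) - Real.log (x i / x j)) ^ 2) ≤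
          ∑ k, w k * ∑ i, ∑ j, (Real.log (A k i j) - Real.log (y i / y j)) ^ 2) ↔
      ∃ u : ℝ, 0 < u ∧ ∀ i, x i = u * ∏ k, (∏ j, A k i j) ^ (w k / n) := by
  have hn0 : (0:ℝ) < (n:ℝ) := by exact_mod_cast Nat.lt_of_lt_of_le Nat.zero_lt_one hn
  set L : Fin m → Fin n → Fin n → ℝ := fun k i j => Real.log (A k i j) with hLdef
  have hskew : ∀ k i j, L k j i = -L k i j := by
    intro k i j
    have h := congrArg Real.log (hrec k i j)
    rw [Real.log_mul (hpos k i j).ne' (hpos k j i).ne', Real.log_one] at h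
    simp only [hLdef]
    linarith
  set r : Fin n → ℝ := fun i => ∑ k, w k * ∑ j, L k i j with hrdef
  -- basic facts
  have hsumL : ∀ k, ∑ i, ∑ j, L k i j = 0 := by
    intro k
    have h : ∑ i, ∑ j, L k i j = -∑ i, ∑ j, L k i j := by
      nth_rewrite 1 [Finset.sum_comm]
      rw [← Finset.sum_neg_distrib]
      refine Finset.sum_congr rfl fun i _ => ?_
      rw [← Finset.sum_neg_distrib]
      exact Finset.sum_congr rfl fun j _ => hskew k i j
    linarith
  have hr0 : ∑ i, r i = 0 := by
    simp only [hrdef]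
    rw [Finset.sum_comm]
    refine Finset.sum_eq_zero fun k _ => ?_
    rw [← Finset.mul_sum, hsumL k, mul_zero]
  -- geometric mean formula
  have hgm : ∀ i, ∏ k, (∏ j, A k i j) ^ (w k / n) = Real.exp (r i / n) := by
    intro i
    have hprod : ∀ k, (0:ℝ) < ∏ j, A k i j :=
      fun k => Finset.prod_pos fun j _ => hpos k i j
    have h1 : ∀ k, (∏ j, A k i j) ^ (w k / n)
        = Real.exp ((w k * ∑ j, L k i j) / n) := by
      intro k
      rw [Real.rpow_def_of_pos (hprod k)]
      congr 1
      rw [Real.log_prod (fun j _ => (hpos k i j).ne')]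
      simp only [hLdef]
      ring
    rw [Finset.prod_congr rfl (fun k _ => h1 k), ← Real.exp_sum]
    congr 1
    rw [hrdef, ← Finset.sum_div]
  -- the key decomposition
  have key : ∀ t : Fin n → ℝ,
      ∑ k, w k * ∑ i, ∑ j, (L k i j - (t i - t j)) ^ 2
        = (∑ k, w k * ∑ i, ∑ j, (L k i j - (r i / n - r j / n)) ^ 2)
          + ∑ i, ∑ j, ((t i - r i / n) - (t j - r j / n)) ^ 2 := by
    intro t
    set Q : Fin m → Fin n → Fin n → ℝ :=
      fun k i j => L k i j - (r i / n - r j / n) with hQdef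
    set d : Fin n → ℝ := fun i => t i - r i / n with hddef
    have hrow : ∀ i, ∑ k, w k * ∑ j, Q k i j = 0 := by
      intro i
      have hinner : ∀ k, ∑ j, Q k i j = ∑ j, L k i j - r i := by
        intro k
        simp only [hQdef]
        rw [Finset.sum_sub_distrib]
        congr 1
        rw [Finset.sum_sub_distrib, Finset.sum_const, ← Finset.sum_div, hr0]
        simp
        field_simp
      simp only [hinner, mul_sub]
      rw [Finset.sum_sub_distrib, ← Finset.sum_mul, hsum, one_mul]
      simp [hrdef]
    have hcol : ∀ j, ∑ k, w k * ∑ i, Q k i j = 0 := by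
      intro j
      have hinner : ∀ k, ∑ i, Q k i j = -(∑ i, L k j i) + r j := by
        intro k
        simp only [hQdef]
        rw [Finset.sum_sub_distrib]
        have h1 : ∑ i, L k i j = -∑ i, L k j i := by
          rw [← Finset.sum_neg_distrib]
          exact Finset.sum_congr rfl fun i _ => hskew k j i
        rw [h1]
        congr 1
        rw [Finset.sum_sub_distrib, ← Finset.sum_div, hr0, Finset.sum_const]
        simp
        field_simp
      simp only [hinner, mul_add, mul_neg]
      rw [Finset.sum_add_distrib, ← Finset.sum_mul, hsum, one_mul,
        Finset.sum_neg_distrib]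
      simp [hrdef]
    have hcross := wgm_cross_vanish w Q d hrow hcol
    have expand : ∀ k, w k * ∑ i, ∑ j, (L k i j - (t i - t j)) ^ 2
        = w k * ∑ i, ∑ j, Q k i j ^ 2
          - 2 * (w k * ∑ i, ∑ j, Q k i j * (d i - d j))
          + w k * ∑ i, ∑ j, (d i - d j) ^ 2 := by
      intro k
      have : ∀ i j, (L k i j - (t i - t j)) ^ 2
          = Q k i j ^ 2 - 2 * (Q k i j * (d i - d j)) + (d i - d j) ^ 2 := by
        intro i j
        simp only [hQdef, hddef]
        ring
      simp only [this, Finset.sum_add_distrib, Finset.sum_sub_distrib,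
        ← Finset.mul_sum]
      ring
    calc ∑ k, w k * ∑ i, ∑ j, (L k i j - (t i - t j)) ^ 2
        = (∑ k, w k * ∑ i, ∑ j, Q k i j ^ 2)
          - 2 * (∑ k, w k * ∑ i, ∑ j, Q k i j * (d i - d j))
          + ∑ k, w k * ∑ i, ∑ j, (d i - d j) ^ 2 := by
          simp only [expand, Finset.sum_add_distrib, Finset.sum_sub_distrib,
            ← Finset.mul_sum]
      _ = (∑ k, w k * ∑ i, ∑ j, Q k i j ^ 2)
          + ∑ i, ∑ j, (d i - d j) ^ 2 := by
          rw [hcross, ← Finset.sum_mul, hsum, one_mul]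
          ring
      _ = _ := by simp only [hQdef, hddef]
  -- log of ratio rewriting
  have hlograt : ∀ (y : Fin n → ℝ), (∀ j, 0 < y j) → ∀ i j : Fin n,
      Real.log (y i / y j) = Real.log (y i) - Real.log (y j) :=
    fun y hy i j => Real.log_div (hy i).ne' (hy j).ne'
  constructor
  · -- forward direction
    intro H
    set τ : Fin n → ℝ := fun i => Real.exp (r i / n) with hτdef
    have hτpos : ∀ i, 0 < τ i := fun i => Real.exp_pos _
    have hFτ : ∑ k, w k * ∑ i, ∑ j, (Real.log (A k i j) - Real.log (τ i / τ j)) ^ 2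
        = ∑ k, w k * ∑ i, ∑ j, (L k i j - (r i / n - r j / n)) ^ 2 := by
      refine Finset.sum_congr rfl fun k _ => ?_
      congr 1
      refine Finset.sum_congr rfl fun i _ => Finset.sum_congr rfl fun j _ => ?_
      rw [hlograt τ hτpos i j, hτdef]
      simp only [Real.log_exp, hLdef]
    have hFx : ∑ k, w k * ∑ i, ∑ j, (Real.log (A k i j) - Real.log (x i / x j)) ^ 2
        = (∑ k, w k * ∑ i, ∑ j, (L k i j - (r i / n - r j / n)) ^ 2)
          + ∑ i, ∑ j, ((Real.log (x i) - r i / n) - (Real.log (x j) - r j / n)) ^ 2 := by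
      rw [show (∑ k, w k * ∑ i, ∑ j, (Real.log (A k i j) - Real.log (x i / x j)) ^ 2)
          = ∑ k, w k * ∑ i, ∑ j, (L k i j - (Real.log (x i) - Real.log (x j))) ^ 2 from ?_]
      · exact key (fun i => Real.log (x i))
      · refine Finset.sum_congr rfl fun k _ => ?_
        congr 1
        refine Finset.sum_congr rfl fun i _ => Finset.sum_congr rfl fun j _ => ?_
        rw [hlograt x hx i j]
    have hle := H τ hτpos
    rw [hFτ, hFx] at hle
    have hD : ∑ i, ∑ j, ((Real.log (x i) - r i / n) - (Real.log (x j) - r j / n)) ^ 2 = 0 := by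
      have hnonneg : (0:ℝ) ≤ ∑ i, ∑ j, ((Real.log (x i) - r i / n) - (Real.log (x j) - r j / n)) ^ 2 :=
        Finset.sum_nonneg fun i _ => Finset.sum_nonneg fun j _ => sq_nonneg _
      linarith
    have hdeq : ∀ i j : Fin n,
        Real.log (x i) - r i / n = Real.log (x j) - r j / n := by
      intro i j
      have h1 := (Finset.sum_eq_zero_iff_of_nonneg
        (fun i _ => Finset.sum_nonneg fun j _ => sq_nonneg _)).mp hD i (Finset.mem_univ i)
      have h2 := (Finset.sum_eq_zero_iff_of_nonneg
        (fun j _ => sq_nonneg _)).mp h1 j (Finset.mem_univ j)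
      have := pow_eq_zero_iff (n := 2) (by norm_num) |>.mp h2
      linarith
    set i0 : Fin n := ⟨0, hn⟩ with hi0
    refine ⟨Real.exp (Real.log (x i0) - r i0 / n), Real.exp_pos _, fun i => ?_⟩
    rw [hgm i, ← Real.exp_add, ← hdeq i i0]
    rw [show Real.log (x i) - r i / n + r i / n = Real.log (x i) by ring]
    exact (Real.exp_log (hx i)).symm
  · -- backward direction
    rintro ⟨u, hu, hxu⟩ y hy
    have hlogx : ∀ i, Real.log (x i) = Real.log u + r i / n := by
      intro i
      rw [hxu i, hgm i, Real.log_mul hu.ne' (Real.exp_pos _).ne', Real.log_exp]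
    have hFx : ∑ k, w k * ∑ i, ∑ j, (Real.log (A k i j) - Real.log (x i / x j)) ^ 2
        = ∑ k, w k * ∑ i, ∑ j, (L k i j - (r i / n - r j / n)) ^ 2 := by
      refine Finset.sum_congr rfl fun k _ => ?_
      congr 1
      refine Finset.sum_congr rfl fun i _ => Finset.sum_congr rfl fun j _ => ?_
      rw [hlograt x hx i j, hlogx i, hlogx j]
      simp only [hLdef]
      ring_nf
    have hFy : ∑ k, w k * ∑ i, ∑ j, (Real.log (A k i j) - Real.log (y i / y j)) ^ 2
        = (∑ k, w k * ∑ i, ∑ j, (L k i j - (r i / n - r j / n)) ^ 2)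
          + ∑ i, ∑ j, ((Real.log (y i) - r i / n) - (Real.log (y j) - r j / n)) ^ 2 := by
      rw [show (∑ k, w k * ∑ i, ∑ j, (Real.log (A k i j) - Real.log (y i / y j)) ^ 2)
          = ∑ k, w k * ∑ i, ∑ j, (L k i j - (Real.log (y i) - Real.log (y j))) ^ 2 from ?_]
      · exact key (fun i => Real.log (y i))
      · refine Finset.sum_congr rfl fun k _ => ?_
        congr 1
        refine Finset.sum_congr rfl fun i _ => Finset.sum_congr rfl fun j _ => ?_
        rw [hlograt y hy i j]
    rw [hFx, hFy]
    have : (0:ℝ) ≤ ∑ i, ∑ j, ((Real.log (y i) - r i / n) - (Real.log (y j) - r j / n)) ^ 2 :=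
      Finset.sum_nonneg fun i _ => Finset.sum_nonneg fun j _ => sq_nonneg _
    linarith
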